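/- Let ε > 2√2/3 and define λ_c by λ_c² = 12/(1 − 4/((3ε/√(9ε² − 8) + 1)²)). Then λ_c² > 12, and with ξ_max = (λ_c²/2)·(1 − √(1 − 12/λ_c²)), the timelike effective potential U_{λ_c}(ξ) = (1 − 2/ξ)·(1 + λ_c²/ξ²) satisfies U_{λ_c}(ξ_max) = ε². -/

import Mathlib

/-- The critical angular momentum `λ_c(ε)`: for `ε > 2√2/3`, the quantity
`λ_c² = 12/(1 − 4/((3ε/√(9ε² − 8) + 1)²))` satisfies `λ_c² > 12`, and the value of
the timelike effective potential at its local maximum `ξ_max` equals `ε²`. -/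
theorem critical_angular_momentum
    (ε : ℝ) (hε : 2 * Real.sqrt 2 / 3 < ε)
    (lc2 : ℝ)
    (hlc2 : lc2 = 12 / (1 - 4 / ((3 * ε / Real.sqrt (9 * ε ^ 2 - 8) + 1) ^ 2)))
    (ξmax : ℝ) (hξmax : ξmax = lc2 / 2 * (1 - Real.sqrt (1 - 12 / lc2))) :
    12 < lc2 ∧ (1 - 2 / ξmax) * (1 + lc2 / ξmax ^ 2) = ε ^ 2 := by
  have hε0 : 0 < ε := lt_trans (by positivity) hε
  have h9 : 0 < 9 * ε ^ 2 - 8 := by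
    nlinarith [Real.sq_sqrt (show (0:ℝ) ≤ 2 by norm_num), Real.sqrt_nonneg 2]
  obtain ⟨s, hs_def⟩ : ∃ x, x = Real.sqrt (9 * ε ^ 2 - 8) := ⟨_, rfl⟩
  rw [← hs_def] at hlc2
  have hs2 : s ^ 2 = 9 * ε ^ 2 - 8 := by rw [hs_def]; exact Real.sq_sqrt h9.le
  have hs0 : 0 < s := by rw [hs_def]; exact Real.sqrt_pos.mpr h9
  have hslt : s < 3 * ε := by nlinarith
  obtain ⟨t, ht_def⟩ : ∃ x, x = 3 * ε / s + 1 := ⟨_, rfl⟩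
  rw [← ht_def] at hlc2
  have ht2 : 2 < t := by
    rw [ht_def]
    have : 1 < 3 * ε / s := (one_lt_div hs0).mpr hslt
    linarith
  have ht0 : 0 < t := by linarith
  have ht4 : 0 < t ^ 2 - 4 := by nlinarith
  have hden : 1 - 4 / t ^ 2 ≠ 0 := by
    have h : 1 - 4 / t ^ 2 = (t ^ 2 - 4) / t ^ 2 := by field_simp
    rw [h]
    positivity
  have hlc2' : lc2 = 12 * t ^ 2 / (t ^ 2 - 4) := by
    rw [hlc2]
    field_simp
  have hlcpos : 12 < lc2 := by
    rw [hlc2', lt_div_iff₀ ht4]; nlinarith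
  refine ⟨hlcpos, ?_⟩
  have hlc0 : lc2 ≠ 0 := by linarith
  have h12 : 1 - 12 / lc2 = 4 / t ^ 2 := by
    rw [hlc2']
    field_simp
    ring
  have hsqrt : Real.sqrt (1 - 12 / lc2) = 2 / t := by
    rw [h12, show (4:ℝ) / t ^ 2 = (2 / t) ^ 2 by ring, Real.sqrt_sq (by positivity)]
  have hξ : ξmax = 6 * t / (t + 2) := by
    rw [hξmax, hsqrt, hlc2']
    field_simp
    ring
  have hξ0 : ξmax ≠ 0 := by
    rw [hξ]; positivity
  have ht : t = (3 * ε + s) / s := by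
    rw [ht_def]; field_simp
  have hU : (1 - 2 / ξmax) * (1 + lc2 / ξmax ^ 2) = 8 * (t - 1) ^ 2 / (9 * t * (t - 2)) := by
    rw [hξ, hlc2']
    have h1 : t + 2 ≠ 0 := by linarith
    have h2 : t - 2 ≠ 0 := by linarith
    field_simp
    ring
  have hd : 0 < 9 * t * (t - 2) := by nlinarith
  rw [hU, div_eq_iff hd.ne', ht]
  have hs0' : s ≠ 0 := hs0.ne'
  field_simp
  linear_combination 9 * ε ^ 2 * hs2
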